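/- arXiv:math/0405513 — 2 statements merged into one kernel-verified Lean document; each statement's English description precedes it below -/
import Mathlib

section
/- Let f be continuously differentiable and nowhere zero on Ω and let P := 1 − (1/(f†f)) f f†. Then the tangent vectors X_L := [∂_L P, P] and X_R := −[∂_R P, P] satisfy, with respect to the scalar product (A, B) = −½ tr(AB): (X_L, X_L) = J_L, (X_R, X_R) = J_R, and (X_L, X_R) = −Re((∂_R f)† P (∂_L f))/(f†f). Hence the induced metric of the surface has components G_LL = J_L, G_RR = J_R, G_LR = −Re((∂_R f)† P (∂_L f)/(f†f)). -/
open Matrix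

noncomputable section

attribute [local instance] Matrix.normedAddCommGroup Matrix.normedSpace

/-- Vectors in ℂ^N. -/
abbrev Vec (N : ℕ) := Fin N → ℂ

/-- Hermitian inner product v† w. -/
def hermIP {N : ℕ} (v w : Vec N) : ℂ := dotProduct (star v) w

/-- The matrix v w†. -/
def outerM {N : ℕ} (v w : Vec N) : Matrix (Fin N) (Fin N) ℂ := vecMulVec v (star w)

/-- The projector P = 1 − (1/(f†f)) f f†. -/
def projM {N : ℕ} (f : Vec N) : Matrix (Fin N) (Fin N) ℂ :=
  1 - (1 / hermIP f f) • outerM f f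

/-- Matrix commutator [A,B] = AB − BA. -/
def mcomm {N : ℕ} (A B : Matrix (Fin N) (Fin N) ℂ) : Matrix (Fin N) (Fin N) ℂ :=
  A * B - B * A

/-- Light-cone direction ξ_L. -/
def dL : ℝ × ℝ := (1, 0)

/-- Light-cone direction ξ_R. -/
def dR : ℝ × ℝ := (0, 1)

/-- Directional (partial) derivative in direction `v`. -/
def pdv {E : Type*} [NormedAddCommGroup E] [NormedSpace ℝ E]
    (v : ℝ × ℝ) (g : ℝ × ℝ → E) (p : ℝ × ℝ) : E := fderiv ℝ g p v

/-- The CP^{N−1} Euler–Lagrange equation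
P·(∂_L∂_R f − (1/(f†f))((f†∂_Rf)∂_Lf + (f†∂_Lf)∂_Rf)) = 0 at a point. -/
def EL {N : ℕ} (f : ℝ × ℝ → Vec N) (p : ℝ × ℝ) : Prop :=
  projM (f p) *ᵥ (pdv dL (fun q => pdv dR f q) p
    - (1 / hermIP (f p) (f p)) • (hermIP (f p) (pdv dR f p) • pdv dL f p
      + hermIP (f p) (pdv dL f p) • pdv dR f p)) = 0

section Aux

variable {N : ℕ}

lemma hermIP_eq (v w : Vec N) : hermIP v w = ∑ i, (starRingEnd ℂ) (v i) * w i := by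
  simp [hermIP, dotProduct, Pi.star_apply, RCLike.star_def]

lemma outerM_apply (v w : Vec N) (i j : Fin N) : outerM v w i j = v i * (starRingEnd ℂ) (w j) := by
  simp [outerM, vecMulVec, RCLike.star_def]

lemma conj_hermIP (v w : Vec N) : (starRingEnd ℂ) (hermIP v w) = hermIP w v := by
  simp [hermIP_eq, map_sum, mul_comm]

lemma outer_mul_outer (a b c d : Vec N) :
    outerM a b * outerM c d = hermIP b c • outerM a d := by
  ext i j
  simp [Matrix.mul_apply, outerM_apply, hermIP_eq, Finset.sum_mul, Finset.mul_sum]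
  exact Finset.sum_congr rfl fun k _ => by ring

lemma trace_outer (a b : Vec N) : (outerM a b).trace = hermIP b a := by
  simp [Matrix.trace, Matrix.diag, outerM_apply, hermIP_eq, mul_comm]

lemma outer_mulVec (a b w : Vec N) : outerM a b *ᵥ w = hermIP b w • a := by
  ext i
  simp [Matrix.mulVec, dotProduct, outerM_apply, hermIP_eq, Finset.sum_mul, Finset.mul_sum]
  exact Finset.sum_congr rfl fun k _ => by ring

lemma hermIP_smul_right (z : ℂ) (a b : Vec N) : hermIP a (z • b) = z * hermIP a b := by
  simp [hermIP_eq, Finset.mul_sum]; exact Finset.sum_congr rfl fun k _ => by ring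

lemma hermIP_sub_right (a b c : Vec N) : hermIP a (b - c) = hermIP a b - hermIP a c := by
  simp [hermIP_eq, mul_sub, Finset.sum_sub_distrib]

lemma hermIP_self_ne_zero (v : Vec N) (hv : v ≠ 0) : hermIP v v ≠ 0 := by
  have h : hermIP v v = ((∑ i, Complex.normSq (v i) : ℝ) : ℂ) := by
    simp [hermIP_eq, Complex.normSq_eq_conj_mul_self]
  rw [h]
  norm_cast
  intro h0
  apply hv
  funext i
  have : Complex.normSq (v i) = 0 :=
    (Finset.sum_eq_zero_iff_of_nonneg (fun j _ => Complex.normSq_nonneg (v j))).mp h0 i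
      (Finset.mem_univ i)
  simpa using Complex.normSq_eq_zero.mp this

lemma pdv_projM (f : ℝ × ℝ → Vec N) (p w : ℝ × ℝ)
    (hd : DifferentiableAt ℝ f p) (hρ : hermIP (f p) (f p) ≠ 0) :
    pdv w (fun r => projM (f r)) p =
      (((hermIP (pdv w f p) (f p) + hermIP (f p) (pdv w f p)) / hermIP (f p) (f p) ^ 2)
          • outerM (f p) (f p))
        - (1 / hermIP (f p) (f p)) • (outerM (pdv w f p) (f p) + outerM (f p) (pdv w f p)) := by
  classical
  set D := fderiv ℝ f p with hDdef
  have hD : HasFDerivAt f D p := hd.hasFDerivAt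
  set C : ℂ →L[ℝ] ℂ := Complex.conjCLE.toContinuousLinearMap with hC
  have hfi : ∀ i, HasFDerivAt (fun r => f r i) ((ContinuousLinearMap.proj i).comp D) p :=
    fun i => hasFDerivAt_pi'.mp hD i
  have hci : ∀ i, HasFDerivAt (fun r => (starRingEnd ℂ) (f r i))
      (C.comp ((ContinuousLinearMap.proj i).comp D)) p := by
    intro i
    exact (C.hasFDerivAt).comp p (hfi i)
  set Ch : (ℝ × ℝ) →L[ℝ] ℂ :=
    ∑ i, ((starRingEnd ℂ) (f p i) • ((ContinuousLinearMap.proj i).comp D)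
           + f p i • (C.comp ((ContinuousLinearMap.proj i).comp D))) with hCh
  have hherm : HasFDerivAt (fun r => hermIP (f r) (f r)) Ch p := by
    have : (fun r => hermIP (f r) (f r)) = fun r => ∑ i, (starRingEnd ℂ) (f r i) * f r i := by
      funext r; exact hermIP_eq _ _
    rw [this, hCh]
    exact HasFDerivAt.fun_sum fun i _ => ((hci i).mul (hfi i))
  have hinv : HasFDerivAt (fun r => (hermIP (f r) (f r))⁻¹)
      ((-(ContinuousLinearMap.mulLeftRight ℝ ℂ (hermIP (f p) (f p))⁻¹
        (hermIP (f p) (f p))⁻¹)).comp Ch) p :=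
    (hasFDerivAt_inv' hρ).comp p hherm
  set Lo : (ℝ × ℝ) →L[ℝ] Matrix (Fin N) (Fin N) ℂ :=
    ContinuousLinearMap.pi (fun i => ContinuousLinearMap.pi (fun j =>
      f p i • (C.comp ((ContinuousLinearMap.proj j).comp D))
        + (starRingEnd ℂ) (f p j) • ((ContinuousLinearMap.proj i).comp D))) with hLo
  have houter : HasFDerivAt (fun r => outerM (f r) (f r)) Lo p := by
    rw [hLo]
    refine hasFDerivAt_pi.mpr fun i => hasFDerivAt_pi.mpr fun j => ?_
    have : (fun r => outerM (f r) (f r) i j) = fun r => f r i * (starRingEnd ℂ) (f r j) := by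
      funext r; exact outerM_apply _ _ _ _
    rw [this]
    exact (hfi i).mul (hci j)
  have hq : HasFDerivAt (fun r => (hermIP (f r) (f r))⁻¹ • outerM (f r) (f r))
      ((hermIP (f p) (f p))⁻¹ • Lo
        + (((-(ContinuousLinearMap.mulLeftRight ℝ ℂ (hermIP (f p) (f p))⁻¹
            (hermIP (f p) (f p))⁻¹)).comp Ch).smulRight (outerM (f p) (f p)))) p :=
    hinv.smul houter
  have hP : HasFDerivAt (fun r => projM (f r))
      (-((hermIP (f p) (f p))⁻¹ • Lo
        + (((-(ContinuousLinearMap.mulLeftRight ℝ ℂ (hermIP (f p) (f p))⁻¹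
            (hermIP (f p) (f p))⁻¹)).comp Ch).smulRight (outerM (f p) (f p))))) p := by
    have : (fun r => projM (f r))
        = fun r => (1 : Matrix (Fin N) (Fin N) ℂ) - (hermIP (f r) (f r))⁻¹ • outerM (f r) (f r) := by
      funext r; simp [projM, one_div]
    rw [this]
    exact hq.const_sub 1
  have hCw : Ch w = hermIP (pdv w f p) (f p) + hermIP (f p) (pdv w f p) := by
    rw [hCh]
    simp only [ContinuousLinearMap.coe_sum', Finset.sum_apply, ContinuousLinearMap.add_apply,
      ContinuousLinearMap.smul_apply, ContinuousLinearMap.comp_apply,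
      ContinuousLinearMap.proj_apply, smul_eq_mul, ContinuousLinearEquiv.coe_coe,
      Complex.conjCLE_apply, hermIP_eq, hC]
    rw [Finset.sum_add_distrib]
    have : pdv w f p = D w := rfl
    rw [this, add_comm]
    congr 1 <;> exact Finset.sum_congr rfl fun k _ => by ring
  have hLow : Lo w = outerM (pdv w f p) (f p) + outerM (f p) (pdv w f p) := by
    funext i j
    show f p i • Complex.conjCLE (D w j) + (starRingEnd ℂ) (f p j) • D w i = _
    have : pdv w f p = D w := rfl
    simp [Matrix.add_apply, outerM_apply, this, Complex.conjCLE_apply, smul_eq_mul]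
    ring
  have e1 : pdv w (fun r => projM (f r)) p
      = -((hermIP (f p) (f p))⁻¹ • (Lo w)
          + (-((hermIP (f p) (f p))⁻¹ * (Ch w) * (hermIP (f p) (f p))⁻¹)) • outerM (f p) (f p)) := by
    show fderiv ℝ (fun r => projM (f r)) p w = _
    rw [hP.fderiv]
    rfl
  rw [e1, hLow, hCw]
  set ρ := hermIP (f p) (f p)
  set U := outerM (pdv w f p) (f p)
  set V := outerM (f p) (pdv w f p)
  set F := outerM (f p) (f p)
  set s := hermIP (pdv w f p) (f p) + hermIP (f p) (pdv w f p) with hs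
  have c1 : (-(ρ⁻¹ * s * ρ⁻¹)) = -(s / ρ ^ 2) := by rw [div_eq_mul_inv, pow_two, mul_inv]; ring
  have c2 : (ρ⁻¹ : ℂ) = 1 / ρ := by rw [one_div]
  rw [c1, c2]
  ext i j
  simp [Matrix.sub_apply, Matrix.add_apply, Matrix.smul_apply, Matrix.neg_apply, smul_eq_mul]
  ring

lemma mcomm_closed (g u : Vec N) (hρ : hermIP g g ≠ 0) :
    mcomm (((hermIP u g + hermIP g u) / hermIP g g ^ 2) • outerM g g
      - (1 / hermIP g g) • (outerM u g + outerM g u)) (projM g)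
    = (1 / hermIP g g) • outerM u g + (-(1 / hermIP g g)) • outerM g u
      + ((hermIP u g - hermIP g u) / hermIP g g ^ 2) • outerM g g := by
  rw [mcomm, projM]
  simp only [Matrix.mul_sub, Matrix.sub_mul, Matrix.mul_one, Matrix.one_mul, Matrix.mul_smul,
    Matrix.smul_mul, Matrix.mul_add, Matrix.add_mul, smul_add, smul_sub, sub_smul,
    outer_mul_outer, smul_smul]
  match_scalars
  · field_simp
    have h8 : hermIP g g ^ 8 * (hermIP g g)⁻¹ ^ 8 = 1 := by
      rw [← mul_pow, mul_inv_cancel₀ hρ, one_pow]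
    ring
  · field_simp
    norm_num
  · field_simp
    norm_num

lemma trace_comb (u v g : Vec N) (x1 x2 x3 y1 y2 y3 : ℂ) :
    ((x1 • outerM u g + x2 • outerM g u + x3 • outerM g g) *
      (y1 • outerM v g + y2 • outerM g v + y3 • outerM g g)).trace
    = x1*y1*(hermIP g v * hermIP g u) + x1*y2*(hermIP g g * hermIP v u)
      + x1*y3*(hermIP g g * hermIP g u)
      + x2*y1*(hermIP u v * hermIP g g) + x2*y2*(hermIP u g * hermIP v g)
      + x2*y3*(hermIP u g * hermIP g g)
      + x3*y1*(hermIP g v * hermIP g g) + x3*y2*(hermIP g g * hermIP v g)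
      + x3*y3*(hermIP g g * hermIP g g) := by
  simp only [Matrix.add_mul, Matrix.mul_add, Matrix.smul_mul, Matrix.mul_smul, smul_smul,
    outer_mul_outer, Matrix.trace_add, Matrix.trace_smul, trace_outer, smul_eq_mul]
  ring

lemma proj_mulVec (g w : Vec N) :
    projM g *ᵥ w = w - ((1 / hermIP g g) * hermIP g w) • g := by
  rw [projM, Matrix.sub_mulVec, Matrix.one_mulVec, Matrix.smul_mulVec, outer_mulVec,
    smul_smul]

lemma hermIP_proj (g a b : Vec N) :
    hermIP a (projM g *ᵥ b) = hermIP a b - (1 / hermIP g g * hermIP g b) * hermIP a g := by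
  rw [proj_mulVec, hermIP_sub_right, hermIP_smul_right]

end Aux

theorem stmt11 {N : ℕ} (hN : 2 ≤ N) (Ω : Set (ℝ × ℝ)) (hΩ : IsOpen Ω)
    (f : ℝ × ℝ → Vec N) (hf : ContDiffOn ℝ 1 f Ω) (hfz : ∀ p ∈ Ω, f p ≠ 0)
    (XL XR : ℝ × ℝ → Matrix (Fin N) (Fin N) ℂ)
    (hXL : XL = fun p => mcomm (pdv dL (fun r => projM (f r)) p) (projM (f p)))
    (hXR : XR = fun p => - mcomm (pdv dR (fun r => projM (f r)) p) (projM (f p))) :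
    ∀ p ∈ Ω,
      -(1 / 2 : ℂ) * (XL p * XL p).trace
          = hermIP (pdv dL f p) (projM (f p) *ᵥ pdv dL f p) / hermIP (f p) (f p) ∧
      -(1 / 2 : ℂ) * (XR p * XR p).trace
          = hermIP (pdv dR f p) (projM (f p) *ᵥ pdv dR f p) / hermIP (f p) (f p) ∧
      -(1 / 2 : ℂ) * (XL p * XR p).trace
          = -(((hermIP (pdv dR f p) (projM (f p) *ᵥ pdv dL f p))
              / hermIP (f p) (f p)).re : ℂ) := by
  intro p hp
  have hd : DifferentiableAt ℝ f p :=
    ((hf p hp).contDiffAt (hΩ.mem_nhds hp)).differentiableAt one_ne_zero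
  have hρ : hermIP (f p) (f p) ≠ 0 := hermIP_self_ne_zero _ (hfz p hp)
  have hXLp : XL p
      = (1 / hermIP (f p) (f p)) • outerM (pdv dL f p) (f p)
        + (-(1 / hermIP (f p) (f p))) • outerM (f p) (pdv dL f p)
        + ((hermIP (pdv dL f p) (f p) - hermIP (f p) (pdv dL f p)) / hermIP (f p) (f p) ^ 2)
            • outerM (f p) (f p) := by
    rw [hXL]
    dsimp only
    rw [pdv_projM f p dL hd hρ, mcomm_closed (f p) (pdv dL f p) hρ]
  have hXRp : XR p
      = (-(1 / hermIP (f p) (f p))) • outerM (pdv dR f p) (f p)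
        + (1 / hermIP (f p) (f p)) • outerM (f p) (pdv dR f p)
        + (-((hermIP (pdv dR f p) (f p) - hermIP (f p) (pdv dR f p)) / hermIP (f p) (f p) ^ 2))
            • outerM (f p) (f p) := by
    rw [hXR]
    dsimp only
    rw [pdv_projM f p dR hd hρ, mcomm_closed (f p) (pdv dR f p) hρ]
    module
  refine ⟨?_, ?_, ?_⟩
  · rw [hXLp, trace_comb, hermIP_proj]
    have h : hermIP (f p) (f p) * (hermIP (f p) (f p))⁻¹ = 1 := mul_inv_cancel₀ hρ
    set ρ := hermIP (f p) (f p)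
    set a := hermIP (pdv dL f p) (f p)
    set b := hermIP (f p) (pdv dL f p)
    set nn := hermIP (pdv dL f p) (pdv dL f p)
    linear_combination (ρ⁻¹ * nn + (1/2) * ρ⁻¹^2 * b^2 - ρ⁻¹^2 * a * b + (1/2) * ρ⁻¹^2 * a^2
      - (1/2) * ρ * ρ⁻¹^3 * b^2 + ρ * ρ⁻¹^3 * a * b - (1/2) * ρ * ρ⁻¹^3 * a^2) * h
  · rw [hXRp, trace_comb, hermIP_proj]
    have h : hermIP (f p) (f p) * (hermIP (f p) (f p))⁻¹ = 1 := mul_inv_cancel₀ hρ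
    set ρ := hermIP (f p) (f p)
    set c := hermIP (pdv dR f p) (f p)
    set d := hermIP (f p) (pdv dR f p)
    set mm := hermIP (pdv dR f p) (pdv dR f p)
    linear_combination (ρ⁻¹ * mm + (1/2) * ρ⁻¹^2 * d^2 - ρ⁻¹^2 * c * d + (1/2) * ρ⁻¹^2 * c^2
      - (1/2) * ρ * ρ⁻¹^3 * d^2 + ρ * ρ⁻¹^3 * c * d - (1/2) * ρ * ρ⁻¹^3 * c^2) * h
  · rw [hXLp, hXRp, trace_comb, hermIP_proj]
    have hre : ∀ z : ℂ, ((z.re : ℝ) : ℂ) = (z + (starRingEnd ℂ) z) / 2 := by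
      intro z
      rw [Complex.add_conj]
      push_cast
      ring
    rw [hre]
    simp only [map_div₀, map_sub, _root_.map_mul, _root_.map_one, conj_hermIP]
    have h : hermIP (f p) (f p) * (hermIP (f p) (f p))⁻¹ = 1 := mul_inv_cancel₀ hρ
    set ρ := hermIP (f p) (f p)
    set a := hermIP (pdv dL f p) (f p)
    set b := hermIP (f p) (pdv dL f p)
    set c := hermIP (pdv dR f p) (f p)
    set d := hermIP (f p) (pdv dR f p)
    set mm := hermIP (pdv dR f p) (pdv dL f p)
    set ww := hermIP (pdv dL f p) (pdv dR f p)
    linear_combination (-(1/2) * ρ⁻¹ * ww - (1/2) * ρ⁻¹ * mm - (1/2) * ρ⁻¹^2 * b * d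
      + (1/2) * ρ⁻¹^2 * b * c + (1/2) * ρ⁻¹^2 * a * d - (1/2) * ρ⁻¹^2 * a * c
      + (1/2) * ρ * ρ⁻¹^3 * b * d - (1/2) * ρ * ρ⁻¹^3 * b * c
      - (1/2) * ρ * ρ⁻¹^3 * a * d + (1/2) * ρ * ρ⁻¹^3 * a * c) * h
end
end

section
/- Let N ≥ 2, let f be continuously differentiable and nowhere zero on Ω, and let P := 1 − (1/(f†f)) f f†. Then the matrix n_P := i·√2·( √((N−1)/N)·1_N − √(N/(N−1))·P ) is skew-Hermitian and traceless (so n_P ∈ su(N)), has unit norm (n_P, n_P) = −½ tr(n_P²) = 1, and is orthogonal to both tangent vectors: (n_P, [∂_L P, P]) = 0 and (n_P, [∂_R P, P]) = 0, where (A,B) := −½ tr(AB). Hence n_P is a unit normal to the surface associated with f. -/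
open Matrix

noncomputable section

attribute [local instance] Matrix.normedAddCommGroup Matrix.normedSpace

open ComplexOrder in
lemma hermIP_ne {N : ℕ} {v : Vec N} (h : v ≠ 0) : hermIP v v ≠ 0 := by
  intro hz
  exact h (dotProduct_star_self_eq_zero.mp hz)

lemma star_hermIP {N : ℕ} (v : Vec N) : star (hermIP v v) = hermIP v v := by
  simp [hermIP, dotProduct, Finset.sum_comm, mul_comm, star_sum]

lemma outerM_conjT {N : ℕ} (v : Vec N) : (outerM v v)ᴴ = outerM v v := by
  ext i j; simp [outerM, conjTranspose_apply, vecMulVec_apply, mul_comm]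

lemma outerM_mul {N : ℕ} (v : Vec N) : outerM v v * outerM v v = hermIP v v • outerM v v := by
  ext i j
  simp only [outerM, Matrix.mul_apply, vecMulVec_apply, Matrix.smul_apply, smul_eq_mul, hermIP, dotProduct]
  rw [Finset.sum_congr rfl (fun k _ => by ring : ∀ k ∈ Finset.univ, v i * star v k * (v k * star v j) = (star v k * v k) * (v i * star v j))]
  rw [← Finset.sum_mul]

lemma trace_outerM {N : ℕ} (v : Vec N) : (outerM v v).trace = hermIP v v := by
  simp [outerM, trace, diag, vecMulVec_apply, hermIP, dotProduct, mul_comm]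

lemma projM_conjT {N : ℕ} (v : Vec N) : (projM v)ᴴ = projM v := by
  simp [projM, conjTranspose_smul, outerM_conjT, star_div₀, star_hermIP]

lemma projM_sq {N : ℕ} {v : Vec N} (h : v ≠ 0) : projM v * projM v = projM v := by
  have hv := hermIP_ne h
  simp only [projM, sub_mul, mul_sub, one_mul, mul_one, Matrix.smul_mul, Matrix.mul_smul,
    outerM_mul, smul_smul]
  rw [show (1 : ℂ) / hermIP v v * (1 / hermIP v v * hermIP v v) = 1 / hermIP v v by field_simp]
  abel

lemma trace_projM {N : ℕ} {v : Vec N} (h : v ≠ 0) : (projM v).trace = (N : ℂ) - 1 := by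
  have hv := hermIP_ne h
  simp [projM, trace_sub, trace_smul, trace_outerM, smul_eq_mul]
  field_simp

lemma tr_comm_zero {N : ℕ} (X D P : Matrix (Fin N) (Fin N) ℂ) (h : X * P = P * X) :
    (X * (D * P - P * D)).trace = 0 := by
  rw [mul_sub, trace_sub, ← mul_assoc, ← mul_assoc, trace_mul_comm (X*D) P, h, mul_assoc, sub_self]

theorem stmt14 {N : ℕ} (hN : 2 ≤ N) (Ω : Set (ℝ × ℝ)) (hΩ : IsOpen Ω)
    (f : ℝ × ℝ → Vec N) (hf : ContDiffOn ℝ 1 f Ω) (hfz : ∀ p ∈ Ω, f p ≠ 0)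
    (nP : ℝ × ℝ → Matrix (Fin N) (Fin N) ℂ)
    (hnP : nP = fun p => (Complex.I * (Real.sqrt 2 : ℂ)) •
      ((Real.sqrt (((N : ℝ) - 1) / (N : ℝ)) : ℂ) • (1 : Matrix (Fin N) (Fin N) ℂ)
        - (Real.sqrt ((N : ℝ) / ((N : ℝ) - 1)) : ℂ) • projM (f p))) :
    ∀ p ∈ Ω,
      (nP p)ᴴ = - nP p ∧ (nP p).trace = 0 ∧
      -(1 / 2 : ℂ) * (nP p * nP p).trace = 1 ∧
      -(1 / 2 : ℂ) * (nP p * mcomm (pdv dL (fun q => projM (f q)) p) (projM (f p))).trace = 0 ∧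
      -(1 / 2 : ℂ) * (nP p * mcomm (pdv dR (fun q => projM (f q)) p) (projM (f p))).trace = 0 := by
  intro p hp
  have hfzp := hfz p hp
  set P := projM (f p) with hP
  have hP2 : P * P = P := projM_sq hfzp
  have hTrP : P.trace = (N : ℂ) - 1 := trace_projM hfzp
  -- real number facts
  have hN2 : (2 : ℝ) ≤ (N : ℝ) := by exact_mod_cast hN
  have hNpos : (0 : ℝ) < (N : ℝ) := by linarith
  have hN1 : (0 : ℝ) < (N : ℝ) - 1 := by linarith
  set A := (Real.sqrt (((N : ℝ) - 1) / (N : ℝ)) : ℂ) with hA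
  set B := (Real.sqrt ((N : ℝ) / ((N : ℝ) - 1)) : ℂ) with hB
  set c := Complex.I * (Real.sqrt 2 : ℂ) with hc
  have haa : A * A = ((N : ℂ) - 1) / (N : ℂ) := by
    rw [hA, ← Complex.ofReal_mul, Real.mul_self_sqrt (by positivity)]
    push_cast; ring
  have hbb : B * B = (N : ℂ) / ((N : ℂ) - 1) := by
    rw [hB, ← Complex.ofReal_mul, Real.mul_self_sqrt (by positivity)]
    push_cast; ring
  have hab : A * B = 1 := by
    rw [hA, hB, ← Complex.ofReal_mul, ← Real.sqrt_mul (by positivity)]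
    rw [show ((N:ℝ)-1)/(N:ℝ) * ((N:ℝ)/((N:ℝ)-1)) = 1 by field_simp]
    simp
  have hane : A ≠ 0 := by
    rw [hA]
    simp only [ne_eq, Complex.ofReal_eq_zero]
    positivity
  have hcc : c * c = -2 := by
    rw [hc]
    rw [show Complex.I * (Real.sqrt 2 : ℂ) * (Complex.I * (Real.sqrt 2 : ℂ))
      = (Complex.I * Complex.I) * ((Real.sqrt 2 : ℂ) * (Real.sqrt 2 : ℂ)) by ring]
    rw [Complex.I_mul_I, ← Complex.ofReal_mul, Real.mul_self_sqrt (by norm_num)]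
    norm_num
  have hNC : (N : ℂ) ≠ 0 := by exact_mod_cast hNpos.ne'
  have hN1C : (N : ℂ) - 1 ≠ 0 := by
    have : ((N : ℝ) - 1 : ℝ) ≠ 0 := hN1.ne'
    intro h; apply this; exact_mod_cast (by push_cast at h ⊢; exact h : ((N:ℝ) - 1 : ℂ) = 0)
  have hcomm : nP p * P = P * nP p := by
    rw [hnP]
    simp only [← hP, ← hA, ← hB, ← hc]
    simp only [Matrix.smul_mul, Matrix.mul_smul, Matrix.sub_mul, Matrix.mul_sub,
      Matrix.one_mul, Matrix.mul_one, hP2]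
  refine ⟨?_, ?_, ?_, ?_, ?_⟩
  · rw [hnP]
    simp only
    rw [conjTranspose_smul, conjTranspose_sub, conjTranspose_smul, conjTranspose_smul,
      conjTranspose_one, projM_conjT]
    rw [show star (Complex.I * (Real.sqrt 2 : ℂ)) = -(Complex.I * (Real.sqrt 2 : ℂ)) by
      simp [Complex.ext_iff]]
    rw [hA, hB, hc]
    simp [Complex.star_def, Complex.conj_ofReal]
  · rw [hnP]
    simp only [trace_smul, trace_sub, trace_one, ← hP, hTrP, smul_eq_mul, ← hA, ← hB, ← hc]
    have key : A * (N : ℂ) - B * ((N : ℂ) - 1) = 0 := by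
      apply mul_left_cancel₀ hane
      rw [mul_zero, mul_sub, ← mul_assoc, ← mul_assoc, haa, hab]
      field_simp
      ring
    simp only [Fintype.card_fin, nsmul_eq_mul]
    rw [key, mul_zero]
  · rw [hnP]
    simp only [← hP, ← hA, ← hB, ← hc]
    simp only [Matrix.smul_mul, Matrix.mul_smul, Matrix.one_mul, Matrix.mul_one,
      Matrix.mul_sub, Matrix.sub_mul, hP2, smul_smul]
    simp only [trace_smul, trace_sub, trace_one, hTrP, smul_eq_mul, Fintype.card_fin,
      nsmul_eq_mul]
    have e1 : A * A * (N : ℂ) = (N : ℂ) - 1 := by rw [haa]; field_simp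
    have e2 : B * B * ((N : ℂ) - 1) = (N : ℂ) := by rw [hbb]; field_simp
    linear_combination (-(1/2) * (A*A*(N:ℂ) - 2*A*B*((N:ℂ)-1) + B*B*((N:ℂ)-1))) * hcc
      + e1 + e2 + (-2*((N:ℂ)-1)) * hab
  · rw [show mcomm (pdv dL (fun q => projM (f q)) p) (projM (f p))
        = pdv dL (fun q => projM (f q)) p * P - P * pdv dL (fun q => projM (f q)) p from rfl]
    rw [tr_comm_zero _ _ _ hcomm, mul_zero]
  · rw [show mcomm (pdv dR (fun q => projM (f q)) p) (projM (f p))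
        = pdv dR (fun q => projM (f q)) p * P - P * pdv dR (fun q => projM (f q)) p from rfl]
    rw [tr_comm_zero _ _ _ hcomm, mul_zero]
end
end
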